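/- Let n ≥ 1 and 1 ≤ k ≤ n. If κ = (κ_1, …, κ_n) ∈ Γ_k, then Σ_{i=1}^n σ_{k-1}(κ|i) · κ_i² ≥ (k/n) · σ_1(κ) · σ_k(κ). -/

import Mathlib

open Finset

/-- The `k`-th elementary symmetric polynomial of `κ : Fin n → ℝ`. -/
noncomputable def esymm {n : ℕ} (k : ℕ) (κ : Fin n → ℝ) : ℝ :=
  ∑ s ∈ Finset.univ.powersetCard k, ∏ i ∈ s, κ i

/-- `σ_k(κ|i)`: the `k`-th elementary symmetric polynomial of the tuple obtained
from `κ` by deleting the entry `κ i`. -/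
noncomputable def esymmDel {n : ℕ} (k : ℕ) (κ : Fin n → ℝ) (i : Fin n) : ℝ :=
  ∑ s ∈ ({i}ᶜ : Finset (Fin n)).powersetCard k, ∏ j ∈ s, κ j

/-- `σ_k(κ|i,j)`: the `k`-th elementary symmetric polynomial of the tuple obtained
from `κ` by deleting the entries `κ i` and `κ j`. -/
noncomputable def esymmDel2 {n : ℕ} (k : ℕ) (κ : Fin n → ℝ) (i j : Fin n) : ℝ :=
  ∑ s ∈ ({i, j}ᶜ : Finset (Fin n)).powersetCard k, ∏ l ∈ s, κ l

/-- The Garding cone `Γ_k = {κ : σ_j(κ) > 0 for all 1 ≤ j ≤ k}`. -/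
def GardingCone {n : ℕ} (k : ℕ) : Set (Fin n → ℝ) :=
  {κ | ∀ j : ℕ, 1 ≤ j → j ≤ k → 0 < esymm j κ}

open Polynomial

section auxlemmas
variable {n : ℕ}

lemma filter_mem_sum (i : Fin n) (k : ℕ) (f : Finset (Fin n) → ℝ) :
    ∑ t ∈ (Finset.univ.powersetCard (k+1)).filter (fun t => i ∈ t), f t
      = ∑ s ∈ ({i}ᶜ : Finset (Fin n)).powersetCard k, f (insert i s) := by
  refine Finset.sum_nbij' (fun t => t.erase i) (fun s => insert i s) ?_ ?_ ?_ ?_ ?_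
  · intro t ht
    simp only [mem_filter, Finset.mem_powersetCard] at ht
    rw [Finset.mem_powersetCard]
    refine ⟨fun x hx => ?_, by rw [Finset.card_erase_of_mem ht.2, ht.1.2]; rfl⟩
    simp only [Finset.mem_compl, Finset.mem_singleton]
    intro hxi; exact (Finset.notMem_erase i t) (hxi ▸ hx)
  · intro s hs
    rw [Finset.mem_powersetCard] at hs
    have hi : i ∉ s := fun h => by simpa using hs.1 h
    simp only [mem_filter, Finset.mem_powersetCard]
    exact ⟨⟨Finset.subset_univ _, by rw [Finset.card_insert_of_notMem hi, hs.2]⟩,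
      Finset.mem_insert_self _ _⟩
  · intro t ht
    simp only [mem_filter] at ht
    exact Finset.insert_erase ht.2
  · intro s hs
    rw [Finset.mem_powersetCard] at hs
    have hi : i ∉ s := fun h => by simpa using hs.1 h
    exact Finset.erase_insert hi
  · intro t ht
    simp only [mem_filter] at ht
    rw [Finset.insert_erase ht.2]

/-- Master double counting lemma. -/
lemma master (k : ℕ) (f : Finset (Fin n) → ℝ) :
    ∑ i : Fin n, ∑ s ∈ ({i}ᶜ : Finset (Fin n)).powersetCard k, f (insert i s)
      = (k+1 : ℝ) * ∑ t ∈ Finset.univ.powersetCard (k+1), f t := by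
  have h1 : ∀ i : Fin n, ∑ s ∈ ({i}ᶜ : Finset (Fin n)).powersetCard k, f (insert i s)
      = ∑ t ∈ (Finset.univ.powersetCard (k+1)).filter (fun t => i ∈ t), f t :=
    fun i => (filter_mem_sum i k f).symm
  simp_rw [h1, Finset.sum_filter]
  rw [Finset.sum_comm, Finset.mul_sum]
  refine Finset.sum_congr rfl fun t ht => ?_
  rw [Finset.mem_powersetCard_univ] at ht
  rw [Finset.sum_ite_mem, Finset.univ_inter, Finset.sum_const, ht]
  push_cast
  ring

lemma compl_sum (m : ℕ) (f : Finset (Fin n) → ℝ) (hm : m ≤ n) :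
    ∑ t ∈ Finset.univ.powersetCard (n - m), f t
      = ∑ t ∈ Finset.univ.powersetCard m, f tᶜ := by
  refine Finset.sum_nbij' (fun t => tᶜ) (fun t => tᶜ) ?_ ?_ ?_ ?_ ?_
  · intro t ht
    rw [Finset.mem_powersetCard_univ] at ht ⊢
    rw [Finset.card_compl, ht, Fintype.card_fin, Nat.sub_sub_self hm]
  · intro t ht
    rw [Finset.mem_powersetCard_univ] at ht ⊢
    rw [Finset.card_compl, ht, Fintype.card_fin]
  · intro t _; exact compl_compl t
  · intro t _; exact compl_compl t
  · intro t _; simp only [compl_compl]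

lemma pc_one_sum (F : Finset (Fin n)) (g : Finset (Fin n) → ℝ) :
    ∑ t ∈ F.powersetCard 1, g t = ∑ i ∈ F, g {i} := by
  rw [Finset.powersetCard_one, Finset.sum_map]; rfl

variable (κ : Fin n → ℝ)

lemma esymm_zero' : esymm 0 κ = 1 := by
  simp [esymm]

lemma esymm_one' : esymm 1 κ = ∑ i, κ i := by
  rw [esymm, pc_one_sum]
  exact Finset.sum_congr rfl fun i _ => by simp

lemma esymm_top : esymm n κ = ∏ i, κ i := by
  have h := Finset.powersetCard_self (Finset.univ : Finset (Fin n))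
  rw [Finset.card_univ, Fintype.card_fin] at h
  rw [esymm, h, Finset.sum_singleton]

/-- `∑ i, κ i * σ_k(κ|i) = (k+1) σ_{k+1}(κ)`. -/
lemma sum_del_mul (k : ℕ) :
    ∑ i, κ i * esymmDel k κ i = (k+1 : ℝ) * esymm (k+1) κ := by
  rw [esymm, ← master k (fun t => ∏ j ∈ t, κ j)]
  refine Finset.sum_congr rfl fun i _ => ?_
  rw [esymmDel, Finset.mul_sum]
  refine Finset.sum_congr rfl fun s hs => ?_
  rw [Finset.mem_powersetCard] at hs
  have hi : i ∉ s := fun h => by simpa using hs.1 h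
  rw [Finset.prod_insert hi]

/-- `σ_{k+1}(κ) = σ_{k+1}(κ|i) + κ_i σ_k(κ|i)`. -/
lemma esymm_del_split (k : ℕ) (i : Fin n) :
    esymm (k+1) κ = esymmDel (k+1) κ i + κ i * esymmDel k κ i := by
  have hA : ∑ t ∈ (Finset.univ.powersetCard (k+1)).filter (fun t => i ∈ t), ∏ j ∈ t, κ j
      = κ i * esymmDel k κ i := by
    rw [filter_mem_sum i k (fun t => ∏ j ∈ t, κ j), esymmDel, Finset.mul_sum]
    refine Finset.sum_congr rfl fun s hs => ?_
    rw [Finset.mem_powersetCard] at hs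
    have hi : i ∉ s := fun h => by simpa using hs.1 h
    rw [Finset.prod_insert hi]
  have hB : ∑ t ∈ (Finset.univ.powersetCard (k+1)).filter (fun t => i ∉ t), ∏ j ∈ t, κ j
      = esymmDel (k+1) κ i := by
    refine Finset.sum_congr ?_ fun _ _ => rfl
    ext t
    simp only [mem_filter, Finset.mem_powersetCard, Finset.subset_univ, true_and]
    constructor
    · rintro ⟨hc, hnot⟩
      refine ⟨fun x hx => ?_, hc⟩
      simp only [Finset.mem_compl, Finset.mem_singleton]
      rintro rfl; exact hnot hx
    · rintro ⟨hsub, hc⟩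
      exact ⟨hc, fun hit => by simpa using hsub hit⟩
  have := Finset.sum_filter_add_sum_filter_not (Finset.univ.powersetCard (k+1))
    (fun t => i ∈ t) (fun t => ∏ j ∈ t, κ j)
  rw [esymm]
  linarith

/-- Newton's inequality, extreme case `j + 1 = n`, tuple form. -/
lemma newton_base (hn : 2 ≤ n) :
    2 * (n:ℝ) * (esymm (n-2) κ * esymm n κ) ≤ ((n:ℝ) - 1) * (esymm (n-1) κ)^2 := by
  set P : Fin n → ℝ := fun i => ∏ m ∈ ({i}ᶜ : Finset (Fin n)), κ m with hP
  set S : ℝ := ∑ i, P i with hS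
  have step1 : esymm (n-1) κ = S := by
    rw [esymm, show n - 1 = n - 1 from rfl, compl_sum 1 _ (by omega), pc_one_sum]
  have step2 : esymm (n-2) κ * esymm n κ
      = ∑ t ∈ Finset.univ.powersetCard 2, ∏ i ∈ t, P i := by
    rw [esymm_top, esymm, compl_sum 2 _ (by omega), Finset.sum_mul]
    refine Finset.sum_congr rfl fun t ht => ?_
    rw [Finset.mem_powersetCard_univ] at ht
    obtain ⟨a, b, hab, rfl⟩ := Finset.card_eq_two.mp ht
    have h1 : ({a}ᶜ : Finset (Fin n)) = insert b ({a, b}ᶜ : Finset (Fin n)) := by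
      ext x
      simp only [Finset.mem_compl, Finset.mem_singleton, Finset.mem_insert, not_or]
      constructor
      · intro h
        rcases eq_or_ne x b with rfl | hxb
        · exact Or.inl rfl
        · exact Or.inr ⟨h, hxb⟩
      · rintro (rfl | ⟨h, -⟩)
        · exact Ne.symm hab
        · exact h
    have h2 : ({b}ᶜ : Finset (Fin n)) = insert a ({a, b}ᶜ : Finset (Fin n)) := by
      ext x
      simp only [Finset.mem_compl, Finset.mem_singleton, Finset.mem_insert, not_or]
      constructor
      · intro h
        rcases eq_or_ne x a with rfl | hxa
        · exact Or.inl rfl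
        · exact Or.inr ⟨hxa, h⟩
      · rintro (rfl | ⟨-, h⟩)
        · exact hab
        · exact h
    have hbn : b ∉ ({a, b}ᶜ : Finset (Fin n)) := by simp
    have han : a ∉ ({a, b}ᶜ : Finset (Fin n)) := by simp
    have h3 : (Finset.univ : Finset (Fin n)) = insert a ({a}ᶜ : Finset (Fin n)) := by
      ext x
      simp only [Finset.mem_insert, Finset.mem_compl, Finset.mem_singleton, Finset.mem_univ,
        true_iff]
      tauto
    have hanotin : a ∉ ({a}ᶜ : Finset (Fin n)) := by simp
    have ePa : P a = κ b * ∏ m ∈ ({a, b}ᶜ : Finset (Fin n)), κ m := by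
      rw [hP]; simp only; rw [h1, Finset.prod_insert hbn]
    have ePb : P b = κ a * ∏ m ∈ ({a, b}ᶜ : Finset (Fin n)), κ m := by
      rw [hP]; simp only; rw [h2, Finset.prod_insert han]
    have eU : ∏ i, κ i = κ a * P a := by
      rw [h3, Finset.prod_insert hanotin]
    rw [Finset.prod_pair hab, eU, ePa, ePb]
    ring
  have step3 : 2 * ∑ t ∈ Finset.univ.powersetCard 2, ∏ i ∈ t, P i
      = S^2 - ∑ i, (P i)^2 := by
    have hm := master (n := n) 1 (fun t => ∏ i ∈ t, P i)
    have inner : ∀ i : Fin n, ∑ s ∈ ({i}ᶜ : Finset (Fin n)).powersetCard 1,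
        ∏ m ∈ insert i s, P m = P i * (S - P i) := by
      intro i
      rw [pc_one_sum ({i}ᶜ) (fun s => ∏ m ∈ insert i s, P m)]
      have : ∀ l ∈ ({i}ᶜ : Finset (Fin n)), ∏ m ∈ insert i {l}, P m = P i * P l := by
        intro l hl
        rw [Finset.mem_compl, Finset.mem_singleton] at hl
        have hil : i ∉ ({l} : Finset (Fin n)) := by
          simp [Ne.symm hl]
        rw [Finset.prod_insert hil, Finset.prod_singleton]
      rw [Finset.sum_congr rfl this, ← Finset.mul_sum]
      congr 1
      have := Finset.sum_compl_add_sum ({i} : Finset (Fin n)) P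
      rw [Finset.sum_singleton] at this
      linarith
    rw [Finset.sum_congr rfl (fun i _ => inner i)] at hm
    have expand : ∑ i, P i * (S - P i) = S^2 - ∑ i, (P i)^2 := by
      have hterm : ∀ i ∈ Finset.univ, P i * (S - P i) = P i * S - P i^2 :=
        fun i _ => by ring
      rw [Finset.sum_congr rfl hterm, Finset.sum_sub_distrib, ← Finset.sum_mul, ← hS]
      ring
    rw [expand] at hm
    norm_num at hm
    linarith
  have cs : S^2 ≤ (n:ℝ) * ∑ i, (P i)^2 := by
    have := Finset.sum_mul_sq_le_sq_mul_sq Finset.univ P (fun _ => (1:ℝ))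
    simp only [mul_one, one_pow, Finset.sum_const, Finset.card_univ, Fintype.card_fin,
      nsmul_eq_mul] at this
    calc S^2 ≤ (∑ i, (P i)^2) * (n:ℝ) := this
    _ = (n:ℝ) * ∑ i, (P i)^2 := by ring
  rw [step1, step2]
  nlinarith [step3, cs]

lemma esymm_eq (k : ℕ) : (Multiset.map κ Finset.univ.val).esymm k = esymm k κ := by
  rw [show (Multiset.map κ Finset.univ.val) = Finset.univ.val.map κ from rfl,
    Finset.esymm_map_val]
  rfl

end auxlemmas

lemma exists_tuple (n : ℕ) (s : Multiset ℝ) (h : Multiset.card s = n) :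
    ∃ κ : Fin n → ℝ, Multiset.map κ Finset.univ.val = s := by
  subst h
  refine ⟨fun i => s.toList.get (Fin.cast (Multiset.length_toList s).symm i), ?_⟩
  conv_rhs => rw [← Multiset.coe_toList s]
  rw [show (Finset.univ.val : Multiset (Fin (Multiset.card s)))
      = ↑(List.finRange (Multiset.card s)) from rfl, Multiset.map_coe]
  congr 1
  refine List.ext_getElem (by simp) ?_
  intro i h1 h2
  simp [List.getElem_map, List.getElem_finRange, List.get_eq_getElem]


/-- Newton's inequality for arbitrary real multisets. -/
lemma newton_ineq : ∀ (N : ℕ) (s : Multiset ℝ), Multiset.card s = N → ∀ j : ℕ, 1 ≤ j → j + 1 ≤ N →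
    ((j:ℝ)+1) * ((N:ℝ) - j + 1) * (Multiset.esymm s (j-1) * Multiset.esymm s (j+1))
      ≤ (j:ℝ) * ((N:ℝ) - j) * Multiset.esymm s j ^ 2 := by
  intro N
  induction N with
  | zero => intro s hs j hj hjN; omega
  | succ N ih =>
    intro s hs j hj hjN
    rcases eq_or_lt_of_le hjN with heq | hlt
    · -- base case : j = N
      obtain ⟨κ, hκ⟩ := exists_tuple (N+1) s hs
      have hn2 : 2 ≤ N + 1 := by omega
      have hb := newton_base κ hn2
      have hjN' : j = N := by omega
      subst hjN'
      rw [← hκ, esymm_eq, esymm_eq, esymm_eq]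
      have i1 : j + 1 - 2 = j - 1 := by omega
      have i2 : j + 1 - 1 = j := by omega
      rw [i1, i2] at hb
      push_cast at hb ⊢
      nlinarith [hb]
    · -- inductive step : j + 1 ≤ N
      have hjN2 : j + 1 ≤ N := by omega
      set P := (s.map fun r => X - C r).prod with hPdef
      have hProots : P.roots = s := roots_multiset_prod_X_sub_C s
      have hPdeg : P.natDegree = N+1 := by
        rw [hPdef, natDegree_multiset_prod_X_sub_C_eq_card, hs]
      have hPmonic : P.Monic :=
        monic_multiset_prod_of_monic _ _ fun a _ => monic_X_sub_C a
      have hQN : (derivative P).coeff N = (N:ℝ)+1 := by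
        rw [Polynomial.coeff_derivative]
        have h1 : P.coeff (N+1) = 1 := by
          have := hPmonic.coeff_natDegree
          rwa [hPdeg] at this
        rw [h1]; push_cast; ring
      have hQne : N ≤ (derivative P).natDegree :=
        Polynomial.le_natDegree_of_ne_zero (by rw [hQN]; positivity)
      have hQdeg : (derivative P).natDegree = N := by
        have h2 := Polynomial.natDegree_derivative_le P
        rw [hPdeg] at h2
        omega
      have hQcard : Multiset.card (derivative P).roots = N := by
        have h3 := Polynomial.card_roots' (derivative P)
        rw [hQdeg] at h3
        have h4 := Polynomial.card_roots_le_derivative P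
        rw [hProots, hs] at h4
        omega
      have key : ∀ i, i ≤ N → ((N:ℝ)+1) * Multiset.esymm (derivative P).roots i
          = ((N:ℝ)+1-i) * Multiset.esymm s i := by
        intro i hi
        have hm : N - i ≤ (derivative P).natDegree := by omega
        have e1 := Polynomial.coeff_eq_esymm_roots_of_card (hQcard.trans hQdeg.symm) hm
        rw [hQdeg, Nat.sub_sub_self hi] at e1
        have hlead : (derivative P).leadingCoeff = (N:ℝ)+1 := by
          rw [Polynomial.leadingCoeff, hQdeg, hQN]
        rw [hlead] at e1
        have e2 : (derivative P).coeff (N-i) = P.coeff (N-i+1) * ((N:ℝ)-i+1) := by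
          rw [Polynomial.coeff_derivative]
          congr 1
          push_cast [Nat.cast_sub hi]
          ring
        have e3 : P.coeff (N-i+1) = (-1)^i * Multiset.esymm s i := by
          have hc : N - i + 1 ≤ Multiset.card s := by omega
          have e := Multiset.prod_X_sub_C_coeff s hc
          rw [hs] at e
          have : N + 1 - (N - i + 1) = i := by omega
          rw [this] at e
          exact e
        have combine : ((N:ℝ)+1) * ((-1)^i * Multiset.esymm (derivative P).roots i)
            = ((-1:ℝ))^i * (((N:ℝ)+1-i) * Multiset.esymm s i) := by
          have := e1.symm.trans (e2.trans (by rw [e3]))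
          push_cast [Nat.cast_sub hi] at this ⊢
          linear_combination this
        have := mul_left_cancel₀ (pow_ne_zero i (by norm_num : (-1:ℝ) ≠ 0))
          (by linear_combination combine :
            (-1:ℝ)^i * (((N:ℝ)+1) * Multiset.esymm (derivative P).roots i)
              = (-1:ℝ)^i * (((N:ℝ)+1-i) * Multiset.esymm s i))
        exact this
      have IH := ih (derivative P).roots hQcard j hj hjN2
      have k1 := key (j-1) (by omega)
      have k2 := key j (by omega)
      have k3 := key (j+1) (by omega)
      push_cast [Nat.cast_sub hj] at k1 k2 k3 ⊢
      have hjr : (j:ℝ) + 1 ≤ (N:ℝ) := by exact_mod_cast hjN2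
      have hface : (0:ℝ) < ((N:ℝ) - j) * ((N:ℝ) + 1 - j) := by nlinarith
      refine le_of_mul_le_mul_left ?_ hface
      have hIH2 := mul_le_mul_of_nonneg_left IH (sq_nonneg ((N:ℝ)+1))
      set u1 := Multiset.esymm (derivative P).roots (j-1)
      set u2 := Multiset.esymm (derivative P).roots j
      set u3 := Multiset.esymm (derivative P).roots (j+1)
      set x := Multiset.esymm s (j-1)
      set y := Multiset.esymm s j
      set z := Multiset.esymm s (j+1)
      have eL : (((N:ℝ) - j) * ((N:ℝ) + 1 - j)) *
            (((j:ℝ)+1) * (((N:ℝ)+1) - j + 1) * (x * z))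
          = ((N:ℝ)+1)^2 * (((j:ℝ)+1) * ((N:ℝ) - j + 1) * (u1 * u3)) := by
        linear_combination (((j:ℝ)+1) * ((N:ℝ)+1-(j:ℝ))) *
          (-((((N:ℝ)+1) * u1) * k3 + (((N:ℝ)-(j:ℝ)) * z) * k1))
      have eR : (((N:ℝ) - j) * ((N:ℝ) + 1 - j)) * ((j:ℝ) * (((N:ℝ)+1) - j) * y^2)
          = ((N:ℝ)+1)^2 * ((j:ℝ) * ((N:ℝ) - j) * u2^2) := by
        linear_combination ((j:ℝ) * ((N:ℝ)-(j:ℝ))) * (-((((N:ℝ)+1-(j:ℝ))*y) + (((N:ℝ)+1)*u2))) * k2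
      calc (((N:ℝ) - j) * ((N:ℝ) + 1 - j)) *
            (((j:ℝ)+1) * (((N:ℝ)+1) - j + 1) * (x * z))
          = ((N:ℝ)+1)^2 * (((j:ℝ)+1) * ((N:ℝ) - j + 1) * (u1 * u3)) := eL
        _ ≤ ((N:ℝ)+1)^2 * ((j:ℝ) * ((N:ℝ) - j) * u2^2) := hIH2
        _ = (((N:ℝ) - j) * ((N:ℝ) + 1 - j)) * ((j:ℝ) * (((N:ℝ)+1) - j) * y^2) := eR.symm

/-- If `κ ∈ Γ_k`, then the sum of `σ_{k-1}(κ|i) * κ_i ^ 2` is at least `(k/n) σ₁ σ_k`. -/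
theorem stmt_0 (n k : ℕ) (hn : 1 ≤ n) (hk1 : 1 ≤ k) (hk2 : k ≤ n)
    (κ : Fin n → ℝ) (hκ : κ ∈ GardingCone k) :
    ∑ i : Fin n, esymmDel (k - 1) κ i * (κ i) ^ 2 ≥
      ((k : ℝ) / n) * esymm 1 κ * esymm k κ := by
  have hκ' : ∀ j : ℕ, 1 ≤ j → j ≤ k → 0 < esymm j κ := hκ
  have hn0 : (0:ℝ) < n := by exact_mod_cast hn
  have hkk : k - 1 + 1 = k := Nat.sub_add_cancel hk1
  -- main identity
  have hid : ∑ i : Fin n, esymmDel (k - 1) κ i * (κ i) ^ 2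
      = esymm 1 κ * esymm k κ - ((k:ℝ)+1) * esymm (k+1) κ := by
    have hterm : ∀ i ∈ Finset.univ, esymmDel (k - 1) κ i * (κ i) ^ 2
        = esymm k κ * κ i - κ i * esymmDel k κ i := by
      intro i _
      have h := esymm_del_split κ (k-1) i
      rw [hkk] at h
      linear_combination (-(κ i)) * h
    rw [Finset.sum_congr rfl hterm, Finset.sum_sub_distrib, ← Finset.mul_sum,
      sum_del_mul κ k, ← esymm_one' κ]
    ring
  -- key inequality
  have hT : ((k:ℝ)+1) * esymm (k+1) κ ≤ (((n:ℝ)-k)/n) * (esymm 1 κ * esymm k κ) := by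
    rcases eq_or_lt_of_le hk2 with rfl | hkn
    · -- k = n
      have hempty : (Finset.univ : Finset (Fin k)).powersetCard (k+1) = ∅ := by
        rw [Finset.powersetCard_eq_empty]
        simp
      have hz : esymm (k+1) κ = 0 := by rw [esymm, hempty, Finset.sum_empty]
      rw [hz]
      simp
    · -- k < n
      have hNewton : ∀ j : ℕ, 1 ≤ j → j + 1 ≤ n →
          ((j:ℝ)+1) * ((n:ℝ)-j+1) * (esymm (j-1) κ * esymm (j+1) κ)
            ≤ (j:ℝ)*((n:ℝ)-j)*esymm j κ ^2 := by
        intro j h1 h2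
        have hcard : Multiset.card (Multiset.map κ Finset.univ.val) = n := by simp
        have := newton_ineq n (Multiset.map κ Finset.univ.val) hcard j h1 h2
        rwa [esymm_eq, esymm_eq, esymm_eq] at this
      set p : ℕ → ℝ := fun j => esymm j κ / (n.choose j) with hp
      have hchoosepos : ∀ j, j ≤ n → (0:ℝ) < (n.choose j : ℝ) := fun j hj => by
        exact_mod_cast Nat.choose_pos hj
      have hppos : ∀ j, 1 ≤ j → j ≤ k → 0 < p j := fun j h1 h2 =>
        div_pos (hκ' j h1 h2) (hchoosepos j (le_trans h2 hk2))
      have hp0 : p 0 = 1 := by simp [hp, esymm_zero']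
      -- Newton's inequality in normalized form
      have pNewton : ∀ j : ℕ, 1 ≤ j → j + 1 ≤ n → p (j-1) * p (j+1) ≤ p j ^ 2 := by
        intro j h1 h2
        have hjn : j ≤ n := by omega
        have hj1n : j - 1 ≤ n := by omega
        have hj1 : j - 1 + 1 = j := Nat.sub_add_cancel h1
        have hCa := hchoosepos (j-1) hj1n
        have hCb := hchoosepos j hjn
        have hCc := hchoosepos (j+1) h2
        have CA : ((j:ℝ)+1) * (n.choose (j+1) : ℝ) = ((n:ℝ) - j) * (n.choose j : ℝ) := by
          have hnat := Nat.choose_succ_right_eq n j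
          have hc : ((n.choose (j+1) * (j+1) : ℕ) : ℝ) = ((n.choose j * (n-j) : ℕ) : ℝ) := by
            exact_mod_cast congrArg (Nat.cast : ℕ → ℝ) hnat
          push_cast [Nat.cast_sub hjn] at hc
          linarith
        have CB : ((n:ℝ) - j + 1) * (n.choose (j-1) : ℝ) = (j:ℝ) * (n.choose j : ℝ) := by
          have hnat := Nat.choose_succ_right_eq n (j-1)
          rw [hj1] at hnat
          have hc : ((n.choose j * j : ℕ) : ℝ) = ((n.choose (j-1) * (n-(j-1)) : ℕ) : ℝ) := by
            exact_mod_cast congrArg (Nat.cast : ℕ → ℝ) hnat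
          push_cast [Nat.cast_sub hj1n, Nat.cast_sub h1] at hc
          linarith
        have hNe := hNewton j h1 h2
        rw [hp]
        simp only
        rw [div_mul_div_comm, div_pow, div_le_div_iff₀ (by positivity) (by positivity)]
        have hjr : (j:ℝ) + 1 ≤ (n:ℝ) := by exact_mod_cast h2
        have hj0 : (0:ℝ) < (j:ℝ) := by exact_mod_cast h1
        have hpos : (0:ℝ) < (j:ℝ)*((n:ℝ)-j) := by nlinarith
        refine le_of_mul_le_mul_left ?_ hpos
        calc ((j:ℝ)*((n:ℝ)-j)) * (esymm (j-1) κ * esymm (j+1) κ * ((n.choose j : ℝ))^2)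
            = ((n.choose (j-1) : ℝ) * (n.choose (j+1) : ℝ)) *
              (((j:ℝ)+1) * ((n:ℝ)-j+1) * (esymm (j-1) κ * esymm (j+1) κ)) := by
              linear_combination (esymm (j-1) κ * esymm (j+1) κ) *
                ((-((j:ℝ) * (n.choose j : ℝ))) * CA - (((j:ℝ)+1) * (n.choose (j+1) : ℝ)) * CB)
          _ ≤ ((n.choose (j-1) : ℝ) * (n.choose (j+1) : ℝ)) *
              ((j:ℝ)*((n:ℝ)-j)*esymm j κ ^2) :=
              mul_le_mul_of_nonneg_left hNe (by positivity)
          _ = ((j:ℝ)*((n:ℝ)-j)) * (esymm j κ ^ 2 * ((n.choose (j-1) : ℝ) * (n.choose (j+1) : ℝ))) := by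
              ring
      -- Maclaurin chain
      have chain : ∀ j : ℕ, 1 ≤ j → j ≤ k → p (j+1) ≤ p 1 * p j := by
        intro j
        induction j with
        | zero => intro h; omega
        | succ m ihm =>
          intro _ hmk
          rcases Nat.eq_zero_or_pos m with rfl | hm1
          · -- base : p 2 ≤ p 1 * p 1
            have hb := pNewton 1 le_rfl (by omega)
            rw [hp0] at hb
            simpa [sq] using hb
          · have IH := ihm hm1 (by omega)
            have hNm := pNewton (m+1) (by omega) (by omega)
            have hpm : 0 < p m := hppos m hm1 (by omega)
            have hpm1 : 0 < p (m+1) := hppos (m+1) (by omega) hmk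
            have hp1 : 0 < p 1 := hppos 1 le_rfl hk1
            have hred : p (m+1-1) = p m := by norm_num
            rw [hred] at hNm
            nlinarith [hNm, IH, hpm, hpm1, hp1, mul_le_mul_of_nonneg_right IH (le_of_lt hpm1)]
      have hchain := chain k hk1 le_rfl
      -- unfold and conclude
      have hCk := hchoosepos k hk2
      have hCk1 := hchoosepos (k+1) hkn
      have hC1 : ((n.choose 1 : ℕ) : ℝ) = (n:ℝ) := by
        rw [Nat.choose_one_right]
      have CAk : ((k:ℝ)+1) * (n.choose (k+1) : ℝ) = ((n:ℝ) - k) * (n.choose k : ℝ) := by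
        have hnat := Nat.choose_succ_right_eq n k
        have hc : ((n.choose (k+1) * (k+1) : ℕ) : ℝ) = ((n.choose k * (n-k) : ℕ) : ℝ) := by
          exact_mod_cast congrArg (Nat.cast : ℕ → ℝ) hnat
        push_cast [Nat.cast_sub hk2] at hc
        linarith
      rw [hp] at hchain
      simp only at hchain
      rw [hC1, div_mul_div_comm, div_le_div_iff₀ hCk1 (by positivity)] at hchain
      -- hchain : esymm (k+1) κ * ((n:ℝ) * choose k) ≤ esymm 1 κ * esymm k κ * choose (k+1)
      have step2 : (((k:ℝ)+1) * esymm (k+1) κ) * ((n:ℝ) * (n.choose k : ℝ))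
          ≤ (((n:ℝ)-k)/n * (esymm 1 κ * esymm k κ)) * ((n:ℝ) * (n.choose k : ℝ)) := by
        have h5 := mul_le_mul_of_nonneg_left hchain (by positivity : (0:ℝ) ≤ (k:ℝ)+1)
        calc (((k:ℝ)+1) * esymm (k+1) κ) * ((n:ℝ) * (n.choose k : ℝ))
            = ((k:ℝ)+1) * (esymm (k+1) κ * ((n:ℝ) * (n.choose k : ℝ))) := by ring
          _ ≤ ((k:ℝ)+1) * (esymm 1 κ * esymm k κ * (n.choose (k+1) : ℝ)) := h5
          _ = (((n:ℝ)-k) * (n.choose k : ℝ)) * (esymm 1 κ * esymm k κ) := by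
              linear_combination (esymm 1 κ * esymm k κ) * CAk
          _ = (((n:ℝ)-k)/n * (esymm 1 κ * esymm k κ)) * ((n:ℝ) * (n.choose k : ℝ)) := by
              field_simp
      exact le_of_mul_le_mul_right step2 (by positivity)
  rw [hid]
  have harr : (((n:ℝ)-k)/n) * (esymm 1 κ * esymm k κ) + ((k:ℝ)/n) * esymm 1 κ * esymm k κ
      = esymm 1 κ * esymm k κ := by
    field_simp
    ring
  linarith
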